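/- Let p : ℕ → [1,∞] and let x belong to the closed linear span (with respect to the norm Φ_p) of the canonical unit vectors (e_n) in ℓ^{p(·)}. Then Φ_p(x − P_m(x)) → 0 as m → ∞, where P_m is the truncation to the first m coordinates. Hence (e_n) is a Schauder basis of its closed linear span. -/
import Mathlib


open scoped ENNReal

/-- `t ⊞_p s`: for `p < ∞`, `(t^p + s^p)^(1/p)`; for `p = ∞`, `max t s`. -/
noncomputable def boxPlus (p : ℝ≥0∞) (t s : ℝ) : ℝ :=
  if p = ∞ then max t s else (t ^ p.toReal + s ^ p.toReal) ^ (1 / p.toReal)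

/-- The recursively defined seminorms `|||x|||_(k)` (0-indexed). -/
noncomputable def seqNorm (p : ℕ → ℝ≥0∞) (x : ℕ → ℝ) : ℕ → ℝ
  | 0 => boxPlus (p 0) |x 0| |x 1|
  | k + 1 => boxPlus (p (k + 1)) (seqNorm p x k) |x (k + 2)|

/-- `Φ_p(x) = lim_k |||x|||_(k)`, as the supremum of the nondecreasing sequence. -/
noncomputable def Phi (p : ℕ → ℝ≥0∞) (x : ℕ → ℝ) : ℝ≥0∞ :=
  ⨆ k, ENNReal.ofReal (seqNorm p x k)

/-- `x` is a bounded real sequence, i.e. `x ∈ ℓ^∞`. -/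
def IsBddSeq (x : ℕ → ℝ) : Prop := ∃ M : ℝ, ∀ n, |x n| ≤ M

/-- Membership in the variable exponent space `ℓ^{p(·)}`. -/
def MemVLp (p : ℕ → ℝ≥0∞) (x : ℕ → ℝ) : Prop := IsBddSeq x ∧ Phi p x < ⊤

/-- A finitely supported sequence, i.e. a member of the linear span of the
canonical unit vectors. -/
def FinSupported (z : ℕ → ℝ) : Prop := ∃ m : ℕ, ∀ j, m ≤ j → z j = 0

/-- Truncation `P_m` to the first `m` coordinates. -/
def truncSeq (m : ℕ) (x : ℕ → ℝ) : ℕ → ℝ := fun n => if n < m then x n else 0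

lemma boxPlus_nonneg (p : ℝ≥0∞) {t s : ℝ} (ht : 0 ≤ t) (hs : 0 ≤ s) :
    0 ≤ boxPlus p t s := by
  unfold boxPlus
  split
  · exact le_max_of_le_left ht
  · positivity

lemma boxPlus_mono (p : ℝ≥0∞) {t t' s s' : ℝ} (ht : 0 ≤ t) (hs : 0 ≤ s)
    (h1 : t ≤ t') (h2 : s ≤ s') : boxPlus p t s ≤ boxPlus p t' s' := by
  unfold boxPlus
  split
  · exact max_le_max h1 h2
  · apply Real.rpow_le_rpow (by positivity)
    · exact add_le_add (Real.rpow_le_rpow ht h1 ENNReal.toReal_nonneg)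
        (Real.rpow_le_rpow hs h2 ENNReal.toReal_nonneg)
    · positivity

lemma seqNorm_nonneg (p : ℕ → ℝ≥0∞) (x : ℕ → ℝ) (k : ℕ) : 0 ≤ seqNorm p x k := by
  induction k with
  | zero => exact boxPlus_nonneg _ (abs_nonneg _) (abs_nonneg _)
  | succ k ih => exact boxPlus_nonneg _ ih (abs_nonneg _)

lemma seqNorm_mono (p : ℕ → ℝ≥0∞) {y w : ℕ → ℝ} (h : ∀ n, |y n| ≤ |w n|) (k : ℕ) :
    seqNorm p y k ≤ seqNorm p w k := by
  induction k with
  | zero => exact boxPlus_mono _ (abs_nonneg _) (abs_nonneg _) (h 0) (h 1)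
  | succ k ih => exact boxPlus_mono _ (seqNorm_nonneg p y k) (abs_nonneg _) ih (h (k + 2))

lemma Phi_mono (p : ℕ → ℝ≥0∞) {y w : ℕ → ℝ} (h : ∀ n, |y n| ≤ |w n|) :
    Phi p y ≤ Phi p w :=
  iSup_mono fun k => ENNReal.ofReal_le_ofReal (seqNorm_mono p h k)

theorem truncation_tendsto_of_mem_closed_span (p : ℕ → ℝ≥0∞) (hp : ∀ n, 1 ≤ p n)
    (x : ℕ → ℝ) (hx : MemVLp p x)
    (hspan : ∀ ε : ℝ, 0 < ε → ∃ z : ℕ → ℝ, FinSupported z ∧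
      Phi p (x - z) < ENNReal.ofReal ε) :
    Filter.Tendsto (fun m => Phi p (x - truncSeq m x)) Filter.atTop (nhds 0) := by
  rw [ENNReal.tendsto_nhds_zero]
  intro ε hε
  rcases eq_or_ne ε ⊤ with rfl | hεtop
  · exact Filter.Eventually.of_forall fun _ => le_top
  · have hε' : 0 < ε.toReal := ENNReal.toReal_pos hε.ne' hεtop
    obtain ⟨z, ⟨m₀, hm₀⟩, hz⟩ := hspan ε.toReal hε'
    filter_upwards [Filter.eventually_ge_atTop m₀] with m hm
    have key : ∀ n, |(x - truncSeq m x) n| ≤ |(x - z) n| := by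
      intro n
      by_cases hn : n < m
      · simp [truncSeq, hn]
      · have : z n = 0 := hm₀ n (hm.trans (not_lt.mp hn))
        simp [truncSeq, hn, this]
    calc Phi p (x - truncSeq m x) ≤ Phi p (x - z) := Phi_mono p key
      _ ≤ ENNReal.ofReal ε.toReal := hz.le
      _ = ε := ENNReal.ofReal_toReal hεtop
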